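/- Let μ₁ ∈ ℝ, σ₁ > 0, σ_e > 0, t ∈ (0,1), and x ∈ ℝ. Let ρ₀ = N(0,1) be the standard Gaussian density and ρ₁ = N(μ₁, σ₁²), and set A(t) = σ_e² t(1−t) + (1−t)². Then the explicit score [∫ (t x₁ − x) ρ₀((x − x₁ t)/√A(t)) ρ₁(x₁) dx₁] / [((1−t)² + (1−t) t σ_e²) ∫ ρ₀((x − x₁ t)/√A(t)) ρ₁(x₁) dx₁] equals s(x,t) = (t μ₁ − x) / ((1−t)² + t(1−t) σ_e² + t² σ₁²), which is the derivative in x of the logarithm of the marginal Gaussian density N(x | t μ₁, (1−t)² + t(1−t) σ_e² + t² σ₁²). -/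

import Mathlib

open MeasureTheory Real

/-- One-dimensional Gaussian density `N(y | μ, σ²)`. -/
noncomputable def gaussDensity (μ σ y : ℝ) : ℝ :=
  (Real.sqrt (2 * Real.pi * σ ^ 2))⁻¹ * Real.exp (-(y - μ) ^ 2 / (2 * σ ^ 2))

lemma gauss_shift {b : ℝ} (m : ℝ) :
    ∫ x : ℝ, Real.exp (-b * (x - m) ^ 2) = Real.sqrt (π / b) :=
  calc ∫ x : ℝ, Real.exp (-b * (x - m) ^ 2)
      = ∫ y : ℝ, Real.exp (-b * y ^ 2) :=
        integral_sub_right_eq_self (μ := volume) (fun y : ℝ => Real.exp (-b * y ^ 2)) m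
    _ = Real.sqrt (π / b) := integral_gaussian b

lemma gauss_odd {b : ℝ} (m : ℝ) :
    ∫ x : ℝ, (x - m) * Real.exp (-b * (x - m) ^ 2) = 0 := by
  have h1 : ∫ x : ℝ, (x - m) * Real.exp (-b * (x - m) ^ 2)
      = ∫ y : ℝ, y * Real.exp (-b * y ^ 2) :=
    integral_sub_right_eq_self (μ := volume) (fun y : ℝ => y * Real.exp (-b * y ^ 2)) m
  have h2 : ∫ y : ℝ, (-y) * Real.exp (-b * (-y) ^ 2)
      = ∫ y : ℝ, y * Real.exp (-b * y ^ 2) :=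
    integral_neg_eq_self (μ := volume) (fun z : ℝ => z * Real.exp (-b * z ^ 2))
  have h3 : ∫ y : ℝ, (-y) * Real.exp (-b * (-y) ^ 2)
      = -∫ y : ℝ, y * Real.exp (-b * y ^ 2) := by
    rw [← integral_neg]
    congr 1; funext y; ring_nf
  rw [h1]
  linarith [h3.symm.trans h2]

theorem gaussian_stochastic_flow_matching_score (μ₁ σ₁ σe t x : ℝ)
    (hσ₁ : 0 < σ₁) (hσe : 0 < σe) (ht : t ∈ Set.Ioo (0 : ℝ) 1)
    (ρ0 ρ1 : ℝ → ℝ)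
    (hρ0 : ∀ y, ρ0 y = gaussDensity 0 1 y)
    (hρ1 : ∀ y, ρ1 y = gaussDensity μ₁ σ₁ y)
    (A : ℝ) (hA : A = σe ^ 2 * t * (1 - t) + (1 - t) ^ 2) :
    (∫ x₁ : ℝ, (t * x₁ - x) * (ρ0 ((x - x₁ * t) / Real.sqrt A) * ρ1 x₁)) /
      (((1 - t) ^ 2 + (1 - t) * t * σe ^ 2) *
        ∫ x₁ : ℝ, ρ0 ((x - x₁ * t) / Real.sqrt A) * ρ1 x₁) =
    (t * μ₁ - x) / ((1 - t) ^ 2 + t * (1 - t) * σe ^ 2 + t ^ 2 * σ₁ ^ 2) ∧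
    HasDerivAt
      (fun y => Real.log (gaussDensity (t * μ₁)
        (Real.sqrt ((1 - t) ^ 2 + t * (1 - t) * σe ^ 2 + t ^ 2 * σ₁ ^ 2)) y))
      ((t * μ₁ - x) / ((1 - t) ^ 2 + t * (1 - t) * σe ^ 2 + t ^ 2 * σ₁ ^ 2)) x := by
  obtain ⟨ht0, ht1⟩ := ht
  have h1t : (0 : ℝ) < 1 - t := by linarith
  have hApos : 0 < A := by
    rw [hA]
    have := mul_pos (mul_pos (pow_pos hσe 2) ht0) h1t
    nlinarith
  set V : ℝ := (1 - t) ^ 2 + t * (1 - t) * σe ^ 2 + t ^ 2 * σ₁ ^ 2 with hVdef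
  have hVeq : V = t ^ 2 * σ₁ ^ 2 + A := by rw [hVdef, hA]; ring
  have hVpos : 0 < V := by
    rw [hVeq]; positivity
  -- second conjunct
  have hderiv : HasDerivAt
      (fun y => Real.log (gaussDensity (t * μ₁) (Real.sqrt V) y))
      ((t * μ₁ - x) / V) x := by
    have hc : (0 : ℝ) < Real.sqrt (2 * π * V) := by positivity
    have hfun : (fun y => Real.log (gaussDensity (t * μ₁) (Real.sqrt V) y))
        = fun y => -Real.log (Real.sqrt (2 * π * V)) - (y - t * μ₁) ^ 2 / (2 * V) := by
      funext y
      rw [gaussDensity, sq_sqrt hVpos.le, Real.log_mul (inv_ne_zero hc.ne') (Real.exp_ne_zero _),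
        Real.log_inv, Real.log_exp]
      ring
    rw [hfun]
    have h1 : HasDerivAt (fun y : ℝ => (y - t * μ₁) ^ 2 / (2 * V))
        (2 * (x - t * μ₁) ^ 1 * 1 / (2 * V)) x :=
      (((hasDerivAt_id x).sub_const (t * μ₁)).pow 2).div_const (2 * V)
    have h2 := h1.const_sub (-Real.log (Real.sqrt (2 * π * V)))
    refine h2.congr_deriv ?_
    rw [pow_one, mul_one, mul_div_mul_left _ _ (two_ne_zero' ℝ)]
    ring
  refine ⟨?_, hderiv⟩
  -- completed square parameters
  set b : ℝ := t ^ 2 / (2 * A) + 1 / (2 * σ₁ ^ 2) with hbdef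
  have hb : 0 < b := by rw [hbdef]; positivity
  set m : ℝ := (t * x * σ₁ ^ 2 + μ₁ * A) / (t ^ 2 * σ₁ ^ 2 + A) with hmdef
  have hD : (0 : ℝ) < t ^ 2 * σ₁ ^ 2 + A := by positivity
  set K : ℝ := (Real.sqrt (2 * π * 1 ^ 2))⁻¹ * (Real.sqrt (2 * π * σ₁ ^ 2))⁻¹ *
      Real.exp (-(x - t * m) ^ 2 / (2 * A) - (m - μ₁) ^ 2 / (2 * σ₁ ^ 2)) with hKdef
  have hK : 0 < K := by rw [hKdef]; positivity
  -- pointwise completed-square identity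
  have key : ∀ x₁ : ℝ, ρ0 ((x - x₁ * t) / Real.sqrt A) * ρ1 x₁
      = K * Real.exp (-b * (x₁ - m) ^ 2) := by
    intro x₁
    rw [hρ0, hρ1, gaussDensity, gaussDensity, hKdef]
    have hu : ((x - x₁ * t) / Real.sqrt A - 0) ^ 2 = (x - x₁ * t) ^ 2 / A := by
      rw [sub_zero, div_pow, sq_sqrt hApos.le]
    rw [hu]
    have expmul : ∀ (c₁ c₂ u v w z : ℝ), u + v = w + z →
        (c₁ * Real.exp u) * (c₂ * Real.exp v) = c₁ * c₂ * Real.exp w * Real.exp z := by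
      intro c₁ c₂ u v w z h
      have hx : Real.exp u * Real.exp v = Real.exp w * Real.exp z := by
        rw [← Real.exp_add, ← Real.exp_add, h]
      calc (c₁ * Real.exp u) * (c₂ * Real.exp v) = c₁ * c₂ * (Real.exp u * Real.exp v) := by ring
        _ = c₁ * c₂ * (Real.exp w * Real.exp z) := by rw [hx]
        _ = c₁ * c₂ * Real.exp w * Real.exp z := by ring
    refine expmul _ _ _ _ _ _ ?_
    rw [hbdef, hmdef]
    field_simp
    ring
  -- integrals
  have hS : 0 < Real.sqrt (π / b) := Real.sqrt_pos.mpr (by positivity)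
  have hden : ∫ x₁ : ℝ, ρ0 ((x - x₁ * t) / Real.sqrt A) * ρ1 x₁
      = K * Real.sqrt (π / b) := by
    simp only [key]
    rw [integral_const_mul, gauss_shift]
  have int1 : Integrable fun x₁ : ℝ => K * t * ((x₁ - m) * Real.exp (-b * (x₁ - m) ^ 2)) :=
    (((integrable_mul_exp_neg_mul_sq hb).comp_sub_right m).const_mul _)
  have int2 : Integrable fun x₁ : ℝ => K * (t * m - x) * Real.exp (-b * (x₁ - m) ^ 2) :=
    (((integrable_exp_neg_mul_sq hb).comp_sub_right m).const_mul _)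
  have hnum : ∫ x₁ : ℝ, (t * x₁ - x) * (ρ0 ((x - x₁ * t) / Real.sqrt A) * ρ1 x₁)
      = K * (t * m - x) * Real.sqrt (π / b) := by
    have heq : ∀ x₁ : ℝ, (t * x₁ - x) * (ρ0 ((x - x₁ * t) / Real.sqrt A) * ρ1 x₁)
        = K * t * ((x₁ - m) * Real.exp (-b * (x₁ - m) ^ 2))
          + K * (t * m - x) * Real.exp (-b * (x₁ - m) ^ 2) := by
      intro x₁; rw [key x₁]; ring
    simp only [heq]
    rw [integral_add int1 int2, integral_const_mul, integral_const_mul, gauss_odd, gauss_shift]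
    ring
  rw [hnum, hden]
  have hA' : (1 - t) ^ 2 + (1 - t) * t * σe ^ 2 = A := by rw [hA]; ring
  rw [hA']
  have key2 : (t * m - x) * V = (t * μ₁ - x) * A := by
    rw [hmdef, hVeq]
    field_simp
    ring
  rw [div_eq_div_iff (by positivity) hVpos.ne']
  linear_combination (K * Real.sqrt (π / b)) * key2
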